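/- Let W be a Wang tile set and μ a shift-invariant Borel probability measure on (ℤ × ℤ) → W with μ(Ω_W) = 1. Then for every color a ∈ C: the sum over all tiles w with east w = a of μ({T : T(0,0) = w}) equals the sum over all tiles w with west w = a of μ({T : T(0,0) = w}); and the sum over all tiles w with north w = a of μ({T : T(0,0) = w}) equals the sum over all tiles w with south w = a of μ({T : T(0,0) = w}). -/

import Mathlib

open MeasureTheory Finset

/-- The tiling space of a Wang tile set. -/
def WangTilingSpace {W C : Type*} (north south east west : W → C) :
    Set ((ℤ × ℤ) → W) :=
  {T | ∀ x y : ℤ,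
    east (T (x, y)) = west (T (x + 1, y)) ∧ north (T (x, y)) = south (T (x, y + 1))}

/-- The shift action: `(σ_u T)(v) = T(v + u)`. -/
def wangShift {W : Type*} (u : ℤ × ℤ) (T : (ℤ × ℤ) → W) : (ℤ × ℤ) → W :=
  fun v => T (v + u)

section Aux

variable {W C : Type*} [Fintype W] [Fintype C] [DecidableEq C]
    [TopologicalSpace W] [DiscreteTopology W] [MeasurableSpace W] [BorelSpace W]

lemma aux_meas_set (s : Set W) : MeasurableSet s := (isOpen_discrete s).measurableSet

lemma aux_cyl_meas (p : ℤ × ℤ) (w : W) : MeasurableSet {T : (ℤ × ℤ) → W | T p = w} := by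
  rw [show {T : (ℤ × ℤ) → W | T p = w} = (fun T : (ℤ × ℤ) → W => T p) ⁻¹' {w} from rfl]
  exact (measurable_pi_apply p) (aux_meas_set {w})

lemma aux_sum (μ : Measure ((ℤ × ℤ) → W)) (f : W → C) (a : C) (p : ℤ × ℤ) :
    (∑ w ∈ univ.filter (fun w => f w = a), μ {T : (ℤ × ℤ) → W | T p = w})
      = μ {T : (ℤ × ℤ) → W | f (T p) = a} := by
  rw [← measure_biUnion_finset ?_ (fun w _ => aux_cyl_meas p w)]
  · congr 1
    ext T
    simp only [Set.mem_iUnion, Set.mem_setOf_eq, mem_filter, mem_univ, true_and]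
    constructor
    · rintro ⟨w, hw, rfl⟩; exact hw
    · intro h; exact ⟨T p, h, rfl⟩
  · intro w _ w' _ hne
    simp only [Function.onFun, Set.disjoint_left, Set.mem_setOf_eq]
    rintro T rfl h
    exact hne h

lemma aux_shift (μ : Measure ((ℤ × ℤ) → W))
    (hinv : ∀ u : ℤ × ℤ, Measure.map (wangShift u) μ = μ)
    (f : W → C) (a : C) (u : ℤ × ℤ) :
    μ {T : (ℤ × ℤ) → W | f (T (0, 0)) = a} = μ {T : (ℤ × ℤ) → W | f (T u) = a} := by
  have hm : Measurable (wangShift (W := W) u) :=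
    measurable_pi_lambda _ (fun v => measurable_pi_apply (v + u))
  have hS : MeasurableSet {T : (ℤ × ℤ) → W | f (T (0, 0)) = a} := by
    rw [show {T : (ℤ × ℤ) → W | f (T (0, 0)) = a}
        = (fun T : (ℤ × ℤ) → W => T (0, 0)) ⁻¹' {w | f w = a} from rfl]
    exact (measurable_pi_apply (0, 0)) (aux_meas_set {w | f w = a})
  calc μ {T : (ℤ × ℤ) → W | f (T (0, 0)) = a}
      = (Measure.map (wangShift u) μ) {T : (ℤ × ℤ) → W | f (T (0, 0)) = a} := by rw [hinv u]
    _ = μ ((wangShift u) ⁻¹' {T : (ℤ × ℤ) → W | f (T (0, 0)) = a}) := Measure.map_apply hm hS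
    _ = μ {T : (ℤ × ℤ) → W | f (T u) = a} := by
        congr 1
        ext T
        simp [wangShift, show ((0, 0) : ℤ × ℤ) + u = u from zero_add u]

end Aux

/-- the switching rules for the tile frequencies of a shift-invariant
probability measure concentrated on the tiling space. -/
theorem switching_rules
    {W C : Type*} [Fintype W] [Nonempty W] [Fintype C] [DecidableEq C]
    [TopologicalSpace W] [DiscreteTopology W] [MeasurableSpace W] [BorelSpace W]
    (north south east west : W → C)
    (μ : Measure ((ℤ × ℤ) → W)) [IsProbabilityMeasure μ]
    (hinv : ∀ u : ℤ × ℤ, Measure.map (wangShift u) μ = μ)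
    (hΩ : μ (WangTilingSpace north south east west) = 1)
    (a : C) :
    (∑ w ∈ univ.filter (fun w => east w = a), μ {T : (ℤ × ℤ) → W | T (0, 0) = w}) =
      (∑ w ∈ univ.filter (fun w => west w = a), μ {T : (ℤ × ℤ) → W | T (0, 0) = w}) ∧
    (∑ w ∈ univ.filter (fun w => north w = a), μ {T : (ℤ × ℤ) → W | T (0, 0) = w}) =
      (∑ w ∈ univ.filter (fun w => south w = a), μ {T : (ℤ × ℤ) → W | T (0, 0) = w}) := by
  -- measurability of the tiling space
  have hΩmeas : MeasurableSet (WangTilingSpace north south east west) := by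
    have : WangTilingSpace north south east west =
        ⋂ x : ℤ, ⋂ y : ℤ,
          ({T : (ℤ × ℤ) → W | east (T (x, y)) = west (T (x + 1, y))} ∩
           {T : (ℤ × ℤ) → W | north (T (x, y)) = south (T (x, y + 1))}) := by
      ext T
      simp [WangTilingSpace, Set.mem_iInter, forall_and]
    rw [this]
    refine MeasurableSet.iInter fun x => MeasurableSet.iInter fun y => MeasurableSet.inter ?_ ?_
    · rw [show {T : (ℤ × ℤ) → W | east (T (x, y)) = west (T (x + 1, y))}
          = (fun T : (ℤ × ℤ) → W => (T (x, y), T (x + 1, y))) ⁻¹'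
            {p : W × W | east p.1 = west p.2} from rfl]
      exact ((measurable_pi_apply (x, y)).prodMk (measurable_pi_apply (x + 1, y)))
        ((isOpen_discrete _).measurableSet)
    · rw [show {T : (ℤ × ℤ) → W | north (T (x, y)) = south (T (x, y + 1))}
          = (fun T : (ℤ × ℤ) → W => (T (x, y), T (x, y + 1))) ⁻¹'
            {p : W × W | north p.1 = south p.2} from rfl]
      exact ((measurable_pi_apply (x, y)).prodMk (measurable_pi_apply (x, y + 1)))
        ((isOpen_discrete _).measurableSet)
  have hΩc : μ (WangTilingSpace north south east west)ᶜ = 0 := by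
    rw [measure_compl hΩmeas (measure_ne_top _ _), hΩ, measure_univ, tsub_self]
  -- two sets agreeing on Ω have equal measure
  have key : ∀ (A B : Set ((ℤ × ℤ) → W)),
      (∀ T ∈ WangTilingSpace north south east west, T ∈ A ↔ T ∈ B) → μ A = μ B := by
    intro A B h
    apply measure_congr
    filter_upwards [mem_ae_iff.2 hΩc] with T hT
    exact propext (h T hT)
  constructor
  · rw [aux_sum μ east a (0, 0), aux_sum μ west a (0, 0), aux_shift μ hinv west a (1, 0)]
    apply key
    intro T hT
    have := (hT 0 0).1
    norm_num at this
    constructor <;> intro h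
    · exact this.symm.trans h
    · exact this.trans h
  · rw [aux_sum μ north a (0, 0), aux_sum μ south a (0, 0), aux_shift μ hinv south a (0, 1)]
    apply key
    intro T hT
    have := (hT 0 0).2
    norm_num at this
    constructor <;> intro h
    · exact this.symm.trans h
    · exact this.trans h
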